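/- Let X be a locally compact, σ-compact space, and for i ∈ ℕ let f_i, f'_i : [0,∞) → X be proper continuous maps such that both assembled maps f, f' : ℕ × [0,∞) → X (defined by (i,x) ↦ f_i(x), resp. f'_i(x)) are proper, and such that for each i the maps f_i and f'_i are properly homotopic. Then f and f' are properly homotopic as maps ℕ × [0,∞) → X; that is, there is a homotopy H : ℕ × [0,∞) × [0,1] → X from f to f' which is a proper map. -/

import Mathlib

open scoped NNReal

/-- A map is proper if it is continuous and preimages of compact sets are compact. -/
def ProperMap {A B : Type*} [TopologicalSpace A] [TopologicalSpace B] (f : A → B) : Prop :=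
  Continuous f ∧ ∀ K : Set B, IsCompact K → IsCompact (f ⁻¹' K)

/-- Two maps are properly homotopic if there is a homotopy between them which is proper. -/
def ProperlyHomotopic {A B : Type*} [TopologicalSpace A] [TopologicalSpace B]
    (f g : A → B) : Prop :=
  ∃ H : A × unitInterval → B, ProperMap H ∧ (∀ a, H (a, 0) = f a) ∧ (∀ a, H (a, 1) = g a)

/-- Assembling continuous slices over a discrete index gives a continuous map. -/
lemma continuous_nat_slices {Y Z : Type*} [TopologicalSpace Y] [TopologicalSpace Z]
    (g : ℕ → Y → Z) (h : ∀ i, Continuous (g i)) :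
    Continuous fun p : ℕ × Y => g p.1 p.2 := by
  rw [continuous_iff_continuousAt]
  rintro ⟨i, y⟩
  have h1 : ContinuousAt (fun p : ℕ × Y => g i p.2) (i, y) :=
    ((h i).comp continuous_snd).continuousAt
  apply h1.congr
  have hmem : ({i} ×ˢ (Set.univ : Set Y)) ∈ nhds ((i, y) : ℕ × Y) := by
    apply prod_mem_nhds
    · simp [nhds_discrete]
    · exact Filter.univ_mem
  filter_upwards [hmem] with p hp
  obtain ⟨h1', -⟩ := hp
  simp only [Set.mem_singleton_iff] at h1'
  rw [h1']

/-- Key single-ray lemma: a proper homotopy between maps missing a compact set `C`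
can be replaced by one whose whole image misses `C`. -/
lemma slide_lemma {X : Type*} [TopologicalSpace X] (g g' : ℝ≥0 → X)
    (hgg : ProperlyHomotopic g g') (C : Set X) (hC : IsCompact C)
    (h1 : ∀ x, g x ∉ C) (h2 : ∀ x, g' x ∉ C) :
    ∃ G : ℝ≥0 × unitInterval → X, Continuous G ∧
      (∀ K : Set X, IsCompact K → IsCompact (G ⁻¹' K)) ∧
      (∀ x, G (x, 0) = g x) ∧ (∀ x, G (x, 1) = g' x) ∧ ∀ p, G p ∉ C := by
  obtain ⟨H, ⟨Hc, Hp⟩, H0, H1⟩ := hgg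
  -- bound for the compact set H ⁻¹' C
  obtain ⟨T, hT⟩ : BddAbove (Prod.fst '' (H ⁻¹' C)) :=
    ((Hp C hC).image continuous_fst).bddAbove
  set T' : ℝ≥0 := T + 1 with hT'
  -- reparametrizations
  set φ : unitInterval → ℝ≥0 :=
    fun t => Real.toNNReal (min (min (3 * (t : ℝ)) (3 - 3 * (t : ℝ))) 1) with hφ
  set ψ : unitInterval → unitInterval :=
    fun t => Set.projIcc (0 : ℝ) 1 zero_le_one (3 * (t : ℝ) - 1) with hψ
  have φc : Continuous φ := by
    apply continuous_real_toNNReal.comp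
    fun_prop
  have ψc : Continuous ψ := by
    apply continuous_projIcc.comp
    fun_prop
  set θ : ℝ≥0 × unitInterval → ℝ≥0 × unitInterval :=
    fun p => (p.1 + φ p.2 * T', ψ p.2) with hθ
  have θc : Continuous θ := by
    apply Continuous.prodMk
    · exact continuous_fst.add ((φc.comp continuous_snd).mul continuous_const)
    · exact ψc.comp continuous_snd
  refine ⟨H ∘ θ, Hc.comp θc, ?_, ?_, ?_, ?_⟩
  · -- properness
    intro K hK
    obtain ⟨B, hB⟩ : BddAbove (Prod.fst '' (H ⁻¹' K)) :=
      ((Hp K hK).image continuous_fst).bddAbove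
    have hclosed : IsClosed ((H ∘ θ) ⁻¹' K) := by
      rw [Set.preimage_comp]
      exact (Hp K hK).isClosed.preimage θc
    apply IsCompact.of_isClosed_subset ((isCompact_Icc (a := (0:ℝ≥0)) (b := B)).prod
      isCompact_univ) hclosed
    rintro ⟨x, t⟩ hx
    have hmem : θ (x, t) ∈ H ⁻¹' K := hx
    have : (θ (x, t)).1 ≤ B := hB ⟨θ (x, t), hmem, rfl⟩
    have hx' : x ≤ B := le_trans (by exact le_self_add) this
    exact ⟨⟨zero_le, hx'⟩, trivial⟩
  · -- t = 0
    intro x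
    have hφ0 : φ 0 = 0 := by
      simp [hφ]
    have hψ0 : ψ 0 = 0 := by
      rw [hψ]
      ext
      simp [Set.projIcc_of_le_left]
    simp only [Function.comp_apply, hθ, hφ0, hψ0]
    simpa using H0 x
  · -- t = 1
    intro x
    have hφ1 : φ 1 = 0 := by
      simp [hφ]
    have hψ1 : ψ 1 = 1 := by
      rw [hψ]
      ext
      simp [Set.projIcc_of_right_le]
      norm_num
    simp only [Function.comp_apply, hθ, hφ1, hψ1]
    simpa using H1 x
  · -- avoids C
    rintro ⟨x, t⟩ hmem
    simp only [Function.comp_apply, hθ] at hmem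
    rcases le_or_gt (3 * (t : ℝ) - 1) 0 with h | h
    · -- ψ t = 0, value is on g
      have hψt : ψ t = 0 := by
        rw [hψ]
        simp only
        rw [Set.projIcc_of_le_left _ h]
        rfl
      rw [hψt, H0] at hmem
      exact h1 _ hmem
    · rcases le_or_gt 1 (3 * (t : ℝ) - 1) with h' | h'
      · -- ψ t = 1, value is on g'
        have hψt : ψ t = 1 := by
          rw [hψ]
          simp only
          rw [Set.projIcc_of_right_le _ h']
          rfl
        rw [hψt, H1] at hmem
        exact h2 _ hmem
      · -- middle region: φ t = 1, so the first coordinate is ≥ T' > T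
        have hφt : φ t = 1 := by
          have e1 : (1:ℝ) ≤ 3 * (t : ℝ) := by linarith
          have e2 : (1:ℝ) ≤ 3 - 3 * (t : ℝ) := by linarith
          have hmin : min (min (3 * (t : ℝ)) (3 - 3 * (t : ℝ))) 1 = 1 :=
            min_eq_right (le_min e1 e2)
          rw [hφ]
          simp only [hmin, Real.toNNReal_one]
        rw [hφt, one_mul] at hmem
        have hle : x + T' ≤ T := hT ⟨(x + T', ψ t), hmem, rfl⟩
        have : T' ≤ T := le_trans (by exact le_add_self) hle
        rw [hT'] at this
        exact absurd this (by simp)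

theorem stmt11 {X : Type*} [TopologicalSpace X] [LocallyCompactSpace X] [SigmaCompactSpace X]
    (f f' : ℕ → ℝ≥0 → X)
    (hfi : ∀ i, ProperMap (f i)) (hf'i : ∀ i, ProperMap (f' i))
    (hf : ProperMap (fun p : ℕ × ℝ≥0 => f p.1 p.2))
    (hf' : ProperMap (fun p : ℕ × ℝ≥0 => f' p.1 p.2))
    (hi : ∀ i, ProperlyHomotopic (f i) (f' i)) :
    ProperlyHomotopic (fun p : ℕ × ℝ≥0 => f p.1 p.2) (fun p : ℕ × ℝ≥0 => f' p.1 p.2) := by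
  classical
  -- compact exhaustion, with K 0 = ∅
  set e : CompactExhaustion X := (CompactExhaustion.choice X).shiftr with he
  -- for each n, a bound N n such that all slices of index ≥ N n miss e n
  have hN : ∀ n : ℕ, ∃ N : ℕ, ∀ i, N ≤ i → (∀ x, f i x ∉ e n) ∧ (∀ x, f' i x ∉ e n) := by
    intro n
    have c1 : IsCompact ((fun p : ℕ × ℝ≥0 => f p.1 p.2) ⁻¹' (e n)) := hf.2 _ (e.isCompact n)
    have c2 : IsCompact ((fun p : ℕ × ℝ≥0 => f' p.1 p.2) ⁻¹' (e n)) := hf'.2 _ (e.isCompact n)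
    have fin1 : (Prod.fst '' ((fun p : ℕ × ℝ≥0 => f p.1 p.2) ⁻¹' (e n))).Finite :=
      isCompact_iff_finite.mp (c1.image continuous_fst)
    have fin2 : (Prod.fst '' ((fun p : ℕ × ℝ≥0 => f' p.1 p.2) ⁻¹' (e n))).Finite :=
      isCompact_iff_finite.mp (c2.image continuous_fst)
    obtain ⟨B1, hB1⟩ := fin1.bddAbove
    obtain ⟨B2, hB2⟩ := fin2.bddAbove
    refine ⟨max B1 B2 + 1, fun i hiN => ⟨fun x hx => ?_, fun x hx => ?_⟩⟩
    · have : i ≤ B1 := hB1 ⟨(i, x), hx, rfl⟩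
      omega
    · have : i ≤ B2 := hB2 ⟨(i, x), hx, rfl⟩
      omega
  choose N hNspec using hN
  -- the avoided set for each slice
  set m : ℕ → ℕ := fun i => Nat.findGreatest (fun n => N n ≤ i) i with hm
  set C : ℕ → Set X := fun i => e (m i) with hCdef
  have hCcompact : ∀ i, IsCompact (C i) := fun i => e.isCompact _
  have hmiss : ∀ i, (∀ x, f i x ∉ C i) ∧ (∀ x, f' i x ∉ C i) := by
    intro i
    rcases Nat.eq_zero_or_pos (m i) with h0 | hpos
    · -- C i = e 0 = ∅
      have : C i = ∅ := by
        rw [hCdef]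
        simp only [h0]
        rfl
      rw [this]
      exact ⟨fun x => Set.notMem_empty _, fun x => Set.notMem_empty _⟩
    · have hP : N (m i) ≤ i :=
        Nat.findGreatest_of_ne_zero (P := fun n => N n ≤ i) rfl hpos.ne'
      exact hNspec (m i) i hP
  -- construct for each i a proper homotopy avoiding C i
  have hG : ∀ i, ∃ G : ℝ≥0 × unitInterval → X, Continuous G ∧
      (∀ K : Set X, IsCompact K → IsCompact (G ⁻¹' K)) ∧
      (∀ x, G (x, 0) = f i x) ∧ (∀ x, G (x, 1) = f' i x) ∧ ∀ p, G p ∉ C i := by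
    intro i
    exact slide_lemma (f i) (f' i) (hi i) (C i) (hCcompact i) (hmiss i).1 (hmiss i).2
  choose G Gc Gp G0 G1 Gmiss using hG
  -- assemble
  refine ⟨fun q => G q.1.1 (q.1.2, q.2), ⟨?_, ?_⟩, fun a => G0 a.1 a.2, fun a => G1 a.1 a.2⟩
  · -- continuity
    have : Continuous fun p : ℕ × (ℝ≥0 × unitInterval) => G p.1 p.2 :=
      continuous_nat_slices G Gc
    exact this.comp ((continuous_fst.comp continuous_fst).prodMk
      ((continuous_snd.comp continuous_fst).prodMk continuous_snd))
  · -- properness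
    intro K hK
    obtain ⟨n0, hn0⟩ := e.exists_superset_of_isCompact hK
    set M : ℕ := max n0 (N n0) with hM
    -- for i ≥ M, G i misses K
    have hmissK : ∀ i, M ≤ i → ∀ p, G i p ∉ K := by
      intro i hMi p hp
      have hn0i : n0 ≤ i := le_trans (le_max_left _ _) hMi
      have hNi : N n0 ≤ i := le_trans (le_max_right _ _) hMi
      have : n0 ≤ m i := Nat.le_findGreatest hn0i hNi
      have hsub : K ⊆ C i := hn0.trans (e.subset this)
      exact Gmiss i p (hsub hp)
    have hEq : ((fun q : (ℕ × ℝ≥0) × unitInterval => G q.1.1 (q.1.2, q.2)) ⁻¹' K) =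
        ⋃ i ∈ Finset.range M, (fun q : ℝ≥0 × unitInterval => ((i, q.1), q.2)) ''
          ((G i) ⁻¹' K) := by
      ext ⟨⟨i, x⟩, t⟩
      simp only [Set.mem_preimage, Set.mem_iUnion, Set.mem_image, Finset.mem_range]
      constructor
      · intro hmem
        refine ⟨i, ?_, (x, t), hmem, rfl⟩
        by_contra h
        exact hmissK i (by omega) (x, t) hmem
      · rintro ⟨j, -, ⟨y, s⟩, hmem, heq⟩
        obtain ⟨h1, h2⟩ := Prod.mk.injEq .. ▸ heq
        obtain ⟨hj, hy⟩ := Prod.mk.injEq .. ▸ h1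
        subst hj; subst hy; subst h2
        exact hmem
    rw [hEq]
    apply (Finset.range M).finite_toSet.isCompact_biUnion
    intro i _
    exact ((Gp i K hK).image (by fun_prop))
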